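/- Let H be a Hilbert space and (p_j)_{j∈J} a family of pairwise orthogonal projections on H summing strongly to 1. Define E(a) := Σ_j p_j a p_j (strong operator convergence). Then E is a conditional expectation onto the relative commutant of {p_j}, and ‖E(a) − a‖ ≤ sup{‖[a,x]‖ : x in the von Neumann algebra generated by the p_j, ‖x‖ ≤ 1} for all a ∈ B(H). -/

import Mathlib

noncomputable section DiagCE

open ContinuousLinearMap Finset Filter

variable {H : Type*} [NormedAddCommGroup H] [InnerProductSpace ℂ H] [CompleteSpace H]
variable {J : Type*} {p : J → H →L[ℂ] H}

local notation "⟪" x ", " y "⟫" => @inner ℂ _ _ x y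

namespace DiagCE

/-- A self-adjoint idempotent has norm at most one. -/
lemma sa_idem_norm_le (q : H →L[ℂ] H) (h1 : IsIdempotentElem q)
    (h2 : IsSelfAdjoint q) : ‖q‖ ≤ 1 := by
  have h := CStarRing.norm_star_mul_self (x := q)
  rw [h2.star_eq, h1.eq] at h
  nlinarith [norm_nonneg q]

lemma adj_move (hsa : ∀ j, IsSelfAdjoint (p j)) (j : J) (u v : H) :
    ⟪p j u, v⟫ = ⟪u, p j v⟫ := by
  conv_lhs => rw [← (hsa j).adjoint_eq]
  exact ContinuousLinearMap.adjoint_inner_left _ _ _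

lemma inner_pp (hidem : ∀ j, IsIdempotentElem (p j)) (hsa : ∀ j, IsSelfAdjoint (p j))
    (horth : ∀ j j', j ≠ j' → p j * p j' = 0) {j k : J} (h : j ≠ k) (ξ η : H) :
    ⟪p j ξ, p k η⟫ = 0 := by
  have h1 : p j ξ = p j (p j ξ) := by rw [← ContinuousLinearMap.mul_apply, (hidem j).eq]
  rw [h1, adj_move hsa, ← ContinuousLinearMap.mul_apply, horth j k h,
    ContinuousLinearMap.zero_apply, inner_zero_right]

lemma qF_idem (hidem : ∀ j, IsIdempotentElem (p j))
    (horth : ∀ j j', j ≠ j' → p j * p j' = 0) (F : Finset J) :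
    IsIdempotentElem (∑ j ∈ F, p j) := by
  show (∑ j ∈ F, p j) * (∑ j ∈ F, p j) = _
  rw [Finset.sum_mul]
  refine Finset.sum_congr rfl fun j hj => ?_
  rw [Finset.mul_sum]
  rw [Finset.sum_eq_single_of_mem j hj (fun k _ hk => horth j k (Ne.symm hk))]
  exact (hidem j).eq

lemma qF_sa (hsa : ∀ j, IsSelfAdjoint (p j)) (F : Finset J) :
    IsSelfAdjoint (∑ j ∈ F, p j) := by
  show star _ = _
  rw [star_sum]
  exact Finset.sum_congr rfl fun j _ => (hsa j).star_eq

lemma qF_norm_le (hidem : ∀ j, IsIdempotentElem (p j)) (hsa : ∀ j, IsSelfAdjoint (p j))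
    (horth : ∀ j j', j ≠ j' → p j * p j' = 0) (F : Finset J) :
    ‖∑ j ∈ F, p j‖ ≤ 1 :=
  sa_idem_norm_le _ (qF_idem hidem horth F) (qF_sa hsa F)

/-- The ranges of the projections form an orthogonal family of subspaces. -/
lemma famOrth (hidem : ∀ j, IsIdempotentElem (p j)) (hsa : ∀ j, IsSelfAdjoint (p j))
    (horth : ∀ j j', j ≠ j' → p j * p j' = 0) :
    OrthogonalFamily ℂ (fun j => LinearMap.range (p j : H →ₗ[ℂ] H))
      (fun j => (LinearMap.range (p j : H →ₗ[ℂ] H)).subtypeₗᵢ) := by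
  intro i j hij v w
  obtain ⟨x, hx⟩ := v.2
  obtain ⟨y, hy⟩ := w.2
  show ⟪(v : H), (w : H)⟫ = 0
  rw [← hx, ← hy]
  exact inner_pp hidem hsa horth hij x y

lemma fin_parseval_le (hidem : ∀ j, IsIdempotentElem (p j))
    (hsa : ∀ j, IsSelfAdjoint (p j)) (horth : ∀ j j', j ≠ j' → p j * p j' = 0)
    (ξ : H) (F : Finset J) : ∑ j ∈ F, ‖p j ξ‖ ^ 2 ≤ ‖ξ‖ ^ 2 := by
  have hp := (famOrth hidem hsa horth).norm_sum
    (fun j => (⟨p j ξ, ⟨ξ, rfl⟩⟩ : LinearMap.range (p j : H →ₗ[ℂ] H))) F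
  simp only [Submodule.coe_subtypeₗᵢ, Submodule.subtype_apply, Submodule.coe_norm] at hp
  rw [← hp]
  have h1 : ∑ i ∈ F, (↑(⟨p i ξ, ⟨ξ, rfl⟩⟩ : LinearMap.range (p i : H →ₗ[ℂ] H)) : H) = (∑ j ∈ F, p j) ξ := by
    rw [ContinuousLinearMap.sum_apply]
  rw [h1]
  have h2 : ‖(∑ j ∈ F, p j) ξ‖ ≤ ‖ξ‖ := by
    calc ‖(∑ j ∈ F, p j) ξ‖ ≤ ‖∑ j ∈ F, p j‖ * ‖ξ‖ := le_opNorm _ _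
    _ ≤ 1 * ‖ξ‖ := by gcongr; exact qF_norm_le hidem hsa horth F
    _ = ‖ξ‖ := one_mul _
  exact pow_le_pow_left₀ (norm_nonneg _) h2 2

lemma sq_summable (hidem : ∀ j, IsIdempotentElem (p j))
    (hsa : ∀ j, IsSelfAdjoint (p j)) (horth : ∀ j j', j ≠ j' → p j * p j' = 0) (ξ : H) :
    Summable (fun j => ‖p j ξ‖ ^ 2) :=
  summable_of_sum_le (c := ‖ξ‖ ^ 2) (fun _ => sq_nonneg _)
    (fun F => fin_parseval_le hidem hsa horth ξ F)

lemma term_norm_le (hidem : ∀ j, IsIdempotentElem (p j))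
    (hsa : ∀ j, IsSelfAdjoint (p j)) (a : H →L[ℂ] H) (ξ : H) (j : J) :
    ‖p j (a (p j ξ))‖ ≤ ‖a‖ * ‖p j ξ‖ := by
  calc ‖p j (a (p j ξ))‖ ≤ ‖p j‖ * ‖a (p j ξ)‖ := le_opNorm _ _
  _ ≤ 1 * ‖a (p j ξ)‖ := by
      gcongr; exact sa_idem_norm_le _ (hidem j) (hsa j)
  _ = ‖a (p j ξ)‖ := one_mul _
  _ ≤ ‖a‖ * ‖p j ξ‖ := le_opNorm _ _

lemma summable_vec (hidem : ∀ j, IsIdempotentElem (p j))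
    (hsa : ∀ j, IsSelfAdjoint (p j)) (horth : ∀ j j', j ≠ j' → p j * p j' = 0)
    (a : H →L[ℂ] H) (ξ : H) : Summable (fun j => p j (a (p j ξ))) := by
  have key := ((famOrth hidem hsa horth).summable_iff_norm_sq_summable
      (fun j => (⟨p j (a (p j ξ)), ⟨a (p j ξ), rfl⟩⟩ : LinearMap.range (p j : H →ₗ[ℂ] H)))).mpr ?_
  · simpa only [Submodule.coe_subtypeₗᵢ, Submodule.subtype_apply] using key
  · refine Summable.of_nonneg_of_le (fun j => sq_nonneg _) (fun j => ?_)
      (((sq_summable hidem hsa horth ξ)).mul_left (‖a‖ ^ 2))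
    calc ‖(⟨p j (a (p j ξ)), ⟨a (p j ξ), rfl⟩⟩ : LinearMap.range (p j : H →ₗ[ℂ] H))‖ ^ 2
        = ‖p j (a (p j ξ))‖ ^ 2 := rfl
    _ ≤ (‖a‖ * ‖p j ξ‖) ^ 2 :=
        pow_le_pow_left₀ (norm_nonneg _) (term_norm_le hidem hsa a ξ j) 2
    _ = ‖a‖ ^ 2 * ‖p j ξ‖ ^ 2 := by ring

lemma sum_norm_le (hidem : ∀ j, IsIdempotentElem (p j))
    (hsa : ∀ j, IsSelfAdjoint (p j)) (horth : ∀ j j', j ≠ j' → p j * p j' = 0)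
    (a : H →L[ℂ] H) (ξ : H) {t : H} (ht : HasSum (fun j => p j (a (p j ξ))) t) :
    ‖t‖ ≤ ‖a‖ * ‖ξ‖ := by
  refine le_of_tendsto ht.norm (Filter.Eventually.of_forall fun F => ?_)
  have hp := (famOrth hidem hsa horth).norm_sum
    (fun j => (⟨p j (a (p j ξ)), ⟨a (p j ξ), rfl⟩⟩ : LinearMap.range (p j : H →ₗ[ℂ] H))) F
  simp only [Submodule.coe_subtypeₗᵢ, Submodule.subtype_apply, Submodule.coe_norm] at hp
  have hp' : ‖∑ i ∈ F, p i (a (p i ξ))‖ ^ 2 = ∑ i ∈ F, ‖p i (a (p i ξ))‖ ^ 2 := hp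
  have h2 : ∑ i ∈ F, ‖p i (a (p i ξ))‖ ^ 2 ≤ ‖a‖ ^ 2 * ‖ξ‖ ^ 2 := by
    calc ∑ i ∈ F, ‖p i (a (p i ξ))‖ ^ 2 ≤ ∑ i ∈ F, ‖a‖ ^ 2 * ‖p i ξ‖ ^ 2 := by
          refine Finset.sum_le_sum fun i _ => ?_
          calc ‖p i (a (p i ξ))‖ ^ 2 ≤ (‖a‖ * ‖p i ξ‖) ^ 2 :=
                pow_le_pow_left₀ (norm_nonneg _) (term_norm_le hidem hsa a ξ i) 2
          _ = ‖a‖ ^ 2 * ‖p i ξ‖ ^ 2 := by ring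
    _ = ‖a‖ ^ 2 * ∑ i ∈ F, ‖p i ξ‖ ^ 2 := by rw [Finset.mul_sum]
    _ ≤ ‖a‖ ^ 2 * ‖ξ‖ ^ 2 := by
        gcongr
        exact fin_parseval_le hidem hsa horth ξ F
  have h3 : ‖∑ i ∈ F, p i (a (p i ξ))‖ ^ 2 ≤ (‖a‖ * ‖ξ‖) ^ 2 := by
    rw [hp']; calc _ ≤ ‖a‖ ^ 2 * ‖ξ‖ ^ 2 := h2
    _ = (‖a‖ * ‖ξ‖) ^ 2 := by ring
  nlinarith [norm_nonneg (∑ i ∈ F, p i (a (p i ξ))),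
    mul_nonneg (norm_nonneg a) (norm_nonneg ξ)]

/-- The diagonal conditional expectation. -/
def Emap (hidem : ∀ j, IsIdempotentElem (p j)) (hsa : ∀ j, IsSelfAdjoint (p j))
    (horth : ∀ j j', j ≠ j' → p j * p j' = 0) (a : H →L[ℂ] H) : H →L[ℂ] H :=
  LinearMap.mkContinuous
    { toFun := fun ξ => ∑' j, p j (a (p j ξ))
      map_add' := fun ξ η => by
        have h1 := (summable_vec hidem hsa horth a ξ).hasSum
        have h2 := (summable_vec hidem hsa horth a η).hasSum
        have h3 : HasSum (fun j => p j (a (p j (ξ + η))))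
            ((∑' j, p j (a (p j ξ))) + ∑' j, p j (a (p j η))) := by
          simpa [map_add] using h1.add h2
        exact h3.tsum_eq
      map_smul' := fun c ξ => by
        have h1 := (summable_vec hidem hsa horth a ξ).hasSum.const_smul c
        have h2 : HasSum (fun j => p j (a (p j (c • ξ)))) (c • ∑' j, p j (a (p j ξ))) := by
          simpa [map_smul] using h1
        exact h2.tsum_eq }
    ‖a‖ (fun ξ => sum_norm_le hidem hsa horth a ξ (summable_vec hidem hsa horth a ξ).hasSum)

lemma Emap_hasSum (hidem : ∀ j, IsIdempotentElem (p j)) (hsa : ∀ j, IsSelfAdjoint (p j))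
    (horth : ∀ j j', j ≠ j' → p j * p j' = 0) (a : H →L[ℂ] H) (ξ : H) :
    HasSum (fun j => p j (a (p j ξ))) (Emap hidem hsa horth a ξ) :=
  (summable_vec hidem hsa horth a ξ).hasSum

lemma Emap_norm_le (hidem : ∀ j, IsIdempotentElem (p j)) (hsa : ∀ j, IsSelfAdjoint (p j))
    (horth : ∀ j j', j ≠ j' → p j * p j' = 0) (a : H →L[ℂ] H) :
    ‖Emap hidem hsa horth a‖ ≤ ‖a‖ :=
  LinearMap.mkContinuous_norm_le _ (norm_nonneg a) _

/-! ### Ring helpers -/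





variable {A : Type*} [Ring A]

def qS {J : Type*} (p : J → A) (F : Finset J) : A := ∑ j ∈ F, p j
def wS {J : Type*} (p : J → A) (T : Finset J) : A := 1 - qS p T - qS p T
def DS {J : Type*} (p : J → A) (a : A) (F : Finset J) : A :=
  (∑ j ∈ F, p j * a * p j) + (1 - qS p F) * a * (1 - qS p F)

variable {J : Type*} {p : J → A}

lemma mul_one_sub_two {x y : A} (h : x * y = 0) :
    (1 - x - x) * (1 - y - y) = 1 - (x + y) - (x + y) := by
  have e : (1 - x - x) * (1 - y - y)
      = 1 - (x + y) - (x + y) + (x * y + x * y + x * y + x * y) := by noncomm_ring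
  rw [e, h]; simp

lemma one_sub_two_mul_one_sub {x y : A} (h : x * y = 0) :
    (1 - x - x) * (1 - y) = 1 - y - x - x := by
  have e : (1 - x - x) * (1 - y) = 1 - y - x - x + (x * y + x * y) := by noncomm_ring
  rw [e, h]; simp

lemma one_sub_mul_one_sub_two {x y : A} (h : y * x = 0) :
    (1 - y) * (1 - x - x) = 1 - y - x - x := by
  have e : (1 - y) * (1 - x - x) = 1 - y - x - x + (y * x + y * x) := by noncomm_ring
  rw [e, h]; simp

lemma symm_sq {x : A} (h : x * x = x) :
    (1 - x - x) * (1 - x - x) = 1 := by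
  have e : (1 - x - x) * (1 - x - x)
      = 1 - x - x - x - x + (x * x + x * x + x * x + x * x) := by noncomm_ring
  rw [e, h]; abel

lemma pq_zero (horth : ∀ j j', j ≠ j' → p j * p j' = 0) {j : J} {F : Finset J} (hj : j ∉ F) :
    p j * qS p F = 0 := by
  rw [qS, Finset.mul_sum]
  exact Finset.sum_eq_zero fun i hi => horth j i (by rintro rfl; exact hj hi)

lemma qp_zero (horth : ∀ j j', j ≠ j' → p j * p j' = 0) {j : J} {F : Finset J} (hj : j ∉ F) :
    qS p F * p j = 0 := by
  rw [qS, Finset.sum_mul]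
  exact Finset.sum_eq_zero fun i hi => horth i j (by rintro rfl; exact hj hi)

/-- The average identity: the diagonal compression over `F` is the average of the
conjugates of `a` by the symmetries `wS p T`, `T ⊆ F`. -/
lemma avg_identity (horth : ∀ j j', j ≠ j' → p j * p j' = 0) (a : A) (F : Finset J) :
    ∑ T ∈ F.powerset, wS p T * a * wS p T = (2 ^ F.card) • DS p a F := by
  classical
  induction F using Finset.induction_on with
  | empty =>
      simp [wS, qS, DS]
  | @insert j F hj ih =>
      set s : A := 1 - p j - p j with hs
      have hwins : ∀ T ∈ F.powerset, wS p (insert j T) = s * wS p T ∧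
          wS p (insert j T) = wS p T * s := by
        intro T hT
        have hjT : j ∉ T := fun h => hj (Finset.mem_powerset.mp hT h)
        have h1 : p j * qS p T = 0 := pq_zero horth hjT
        have h2 : qS p T * p j = 0 := qp_zero horth hjT
        have hq : qS p (insert j T) = p j + qS p T := by rw [qS, qS, Finset.sum_insert hjT]
        constructor
        · rw [hs, wS, wS, mul_one_sub_two h1, hq]
        · rw [hs, wS, wS, mul_one_sub_two h2, hq, add_comm (qS p T) (p j)]
      have hdisj : Disjoint F.powerset (F.powerset.image (insert j)) := by
        rw [Finset.disjoint_left]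
        intro T hT hT'
        obtain ⟨T', _, rfl⟩ := Finset.mem_image.mp hT'
        exact hj (Finset.mem_powerset.mp hT (Finset.mem_insert_self j T'))
      have hinj : ∀ x ∈ F.powerset, ∀ y ∈ F.powerset, insert j x = insert j y → x = y := by
        intro x hx y hy hxy
        have hjx : j ∉ x := fun h => hj (Finset.mem_powerset.mp hx h)
        have hjy : j ∉ y := fun h => hj (Finset.mem_powerset.mp hy h)
        rw [← Finset.erase_insert hjx, hxy, Finset.erase_insert hjy]
      rw [Finset.powerset_insert, Finset.sum_union hdisj, Finset.sum_image hinj]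
      have himg : ∑ T ∈ F.powerset, wS p (insert j T) * a * wS p (insert j T)
          = s * (∑ T ∈ F.powerset, wS p T * a * wS p T) * s := by
        rw [Finset.mul_sum, Finset.sum_mul]
        refine Finset.sum_congr rfl fun T hT => ?_
        obtain ⟨hl, hr⟩ := hwins T hT
        symm
        calc s * (wS p T * a * wS p T) * s = (s * wS p T) * a * (wS p T * s) := by
              noncomm_ring
        _ = wS p (insert j T) * a * wS p (insert j T) := by rw [← hl, ← hr]
      rw [himg, ih]
      -- now prove: 2^|F| • D F + s * (2^|F| • D F) * s = 2^(|F|+1) • D (insert j F)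
      have hpjF : p j * qS p F = 0 := pq_zero horth hj
      have hqpj : qS p F * p j = 0 := qp_zero horth hj
      have hsum : s * (∑ i ∈ F, p i * a * p i) * s = ∑ i ∈ F, p i * a * p i := by
        rw [Finset.mul_sum, Finset.sum_mul]
        refine Finset.sum_congr rfl fun i hi => ?_
        have hji : p j * p i = 0 := horth j i (by rintro rfl; exact hj hi)
        have hij : p i * p j = 0 := horth i j (by rintro rfl; exact hj hi)
        have h1 : s * p i = p i := by
          rw [hs, sub_mul, sub_mul, one_mul, hji, sub_zero, sub_zero]
        have h2 : p i * s = p i := by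
          rw [hs, mul_sub, mul_sub, mul_one, hij, sub_zero, sub_zero]
        calc s * (p i * a * p i) * s = (s * p i) * a * (p i * s) := by noncomm_ring
        _ = p i * a * p i := by rw [h1, h2]
      have hsr : s * (1 - qS p F) = 1 - qS p F - p j - p j := one_sub_two_mul_one_sub hpjF
      have hrs : (1 - qS p F) * s = 1 - qS p F - p j - p j := one_sub_mul_one_sub_two hqpj
      have hDins : DS p a (insert j F) = (∑ i ∈ F, p i * a * p i) + p j * a * p j
          + ((1 - qS p F) - p j) * a * ((1 - qS p F) - p j) := by
        rw [DS, Finset.sum_insert hj]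
        have hq : qS p (insert j F) = p j + qS p F := by rw [qS, qS, Finset.sum_insert hj]
        rw [hq]
        have h3 : 1 - (p j + qS p F) = (1 - qS p F) - p j := by abel
        rw [h3]
        abel
      have hkey : DS p a F + s * DS p a F * s
          = DS p a (insert j F) + DS p a (insert j F) := by
        rw [DS, mul_add, add_mul, hsum]
        have h4 : s * ((1 - qS p F) * a * (1 - qS p F)) * s
            = (s * (1 - qS p F)) * a * ((1 - qS p F) * s) := by noncomm_ring
        rw [h4, hsr, hrs, hDins]
        generalize (∑ i ∈ F, p i * a * p i) = X
        generalize (1 - qS p F) = u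
        noncomm_ring
      calc (2 ^ F.card) • DS p a F + s * ((2 ^ F.card) • DS p a F) * s
          = (2 ^ F.card) • (DS p a F + s * DS p a F * s) := by
            rw [mul_smul_comm, smul_mul_assoc, smul_add]
      _ = (2 ^ F.card) • (DS p a (insert j F) + DS p a (insert j F)) := by rw [hkey]
      _ = (2 ^ F.card) • ((2 : ℕ) • DS p a (insert j F)) := by rw [two_smul]
      _ = (2 ^ (insert j F).card) • DS p a (insert j F) := by
            rw [smul_smul, Finset.card_insert_of_notMem hj, pow_succ]

variable {p : J → H →L[ℂ] H}

lemma commutator_bound (hidem : ∀ j, IsIdempotentElem (p j))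
    (hsa : ∀ j, IsSelfAdjoint (p j)) (horth : ∀ j j', j ≠ j' → p j * p j' = 0)
    (hone : ∀ ξ : H, HasSum (fun j => p j ξ) ξ)
    {E : (H →L[ℂ] H) → (H →L[ℂ] H)}
    (hE : ∀ a (ξ : H), HasSum (fun j => p j (a (p j ξ))) (E a ξ))
    (a : H →L[ℂ] H) (c : ℝ)
    (hc : ∀ x ∈ Set.centralizer (Set.centralizer (Set.range p)),
      ‖x‖ ≤ 1 → ‖a * x - x * a‖ ≤ c) :
    ‖E a - a‖ ≤ c := by
  classical
  have hc0 : 0 ≤ c := by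
    have h0 : (0 : H →L[ℂ] H) ∈ Set.centralizer (Set.centralizer (Set.range p)) := by
      intro m _; simp
    simpa using hc 0 h0 (by simp)
  have hqidem : ∀ T : Finset J, IsIdempotentElem (qS p T) := fun T => qF_idem hidem horth T
  have hqsa : ∀ T : Finset J, IsSelfAdjoint (qS p T) := fun T => qF_sa hsa T
  have hwone : ∀ T : Finset J, wS p T * wS p T = 1 := fun T => symm_sq (hqidem T).eq
  have hwnorm : ∀ T : Finset J, ‖wS p T‖ ≤ 1 := by
    intro T
    have h2 : star (wS p T) = wS p T := by
      rw [wS, star_sub, star_sub, star_one, (hqsa T).star_eq]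
    have h3 := CStarRing.norm_star_mul_self (x := wS p T)
    rw [h2, hwone T] at h3
    have h4 : ‖(1 : H →L[ℂ] H)‖ ≤ 1 := by
      rw [ContinuousLinearMap.one_def]; exact ContinuousLinearMap.norm_id_le
    nlinarith [norm_nonneg (wS p T)]
  have hwmem : ∀ T : Finset J, wS p T ∈ Set.centralizer (Set.centralizer (Set.range p)) := by
    intro T m hm
    have hmq : m * qS p T = qS p T * m := by
      rw [qS, Finset.mul_sum, Finset.sum_mul]
      exact Finset.sum_congr rfl fun i _ =>
        (Set.mem_centralizer_iff.mp hm (p i) ⟨i, rfl⟩).symm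
    show m * wS p T = wS p T * m
    rw [wS, mul_sub, mul_sub, mul_one, sub_mul, sub_mul, one_mul, hmq]
  have hcomm : ∀ T : Finset J, ‖wS p T * a * wS p T - a‖ ≤ c := by
    intro T
    have e : wS p T * a * wS p T - a = (wS p T * a - a * wS p T) * wS p T := by
      rw [sub_mul, mul_assoc a, hwone T, mul_one]
    rw [e]
    calc ‖(wS p T * a - a * wS p T) * wS p T‖
        ≤ ‖wS p T * a - a * wS p T‖ * ‖wS p T‖ := norm_mul_le _ _
    _ ≤ c * 1 := by
        refine mul_le_mul ?_ (hwnorm T) (norm_nonneg _) hc0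
        rw [norm_sub_rev]; exact hc (wS p T) (hwmem T) (hwnorm T)
    _ = c := mul_one c
  have hDbound : ∀ F : Finset J, ‖DS p a F - a‖ ≤ c := by
    intro F
    have h1 : (2 ^ F.card : ℕ) • (DS p a F - a)
        = ∑ T ∈ F.powerset, (wS p T * a * wS p T - a) := by
      rw [Finset.sum_sub_distrib, avg_identity horth a F, Finset.sum_const,
        Finset.card_powerset, smul_sub]
    have h2 : ‖∑ T ∈ F.powerset, (wS p T * a * wS p T - a)‖ ≤ (2 ^ F.card : ℝ) * c := by
      calc ‖∑ T ∈ F.powerset, (wS p T * a * wS p T - a)‖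
          ≤ ∑ T ∈ F.powerset, ‖wS p T * a * wS p T - a‖ := norm_sum_le _ _
      _ ≤ ∑ _T ∈ F.powerset, c := Finset.sum_le_sum fun T _ => hcomm T
      _ = (2 ^ F.card : ℝ) * c := by
          rw [Finset.sum_const, Finset.card_powerset, nsmul_eq_mul]; push_cast; ring
    rw [← h1, RCLike.norm_nsmul (K := ℂ), nsmul_eq_mul] at h2
    push_cast at h2
    have hpos : (0 : ℝ) < 2 ^ F.card := by positivity
    exact le_of_mul_le_mul_left h2 hpos
  refine ContinuousLinearMap.opNorm_le_bound _ hc0 fun ξ => ?_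
  have hone' : Tendsto (fun F : Finset J => (qS p F) ξ) atTop (nhds ξ) := by
    have e : (fun F : Finset J => (qS p F) ξ) = fun F : Finset J => ∑ j ∈ F, p j ξ := by
      funext F; rw [qS, ContinuousLinearMap.sum_apply]
    rw [e]; exact hone ξ
  have hr0 : Tendsto (fun F : Finset J => ξ - (qS p F) ξ) atTop (nhds 0) := by
    have h := (tendsto_const_nhds (α := Finset J) (x := ξ)).sub hone'
    simpa using h
  have hrnorm : ∀ F : Finset J, ‖(1 : H →L[ℂ] H) - qS p F‖ ≤ 1 := by
    intro F
    refine sa_idem_norm_le _ (hqidem F).one_sub ?_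
    show star _ = _
    rw [star_sub, star_one, (hqsa F).star_eq]
  have hg0 : Tendsto (fun F : Finset J => ((1 - qS p F) * a * (1 - qS p F)) ξ)
      atTop (nhds 0) := by
    refine squeeze_zero_norm (a := fun F : Finset J => ‖a‖ * ‖ξ - (qS p F) ξ‖)
      (fun F => ?_) ?_
    · 
      have e1 : ((1 - qS p F) * a * (1 - qS p F)) ξ
          = (1 - qS p F) (a ((1 - qS p F) ξ)) := by
        rw [ContinuousLinearMap.mul_apply, ContinuousLinearMap.mul_apply]
      have e2 : ((1 : H →L[ℂ] H) - qS p F) ξ = ξ - (qS p F) ξ := by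
        rw [ContinuousLinearMap.sub_apply, ContinuousLinearMap.one_apply]
      rw [e1, e2]
      calc ‖(1 - qS p F) (a (ξ - (qS p F) ξ))‖
          ≤ ‖(1 : H →L[ℂ] H) - qS p F‖ * ‖a (ξ - (qS p F) ξ)‖ := le_opNorm _ _
      _ ≤ 1 * ‖a (ξ - (qS p F) ξ)‖ := by
          exact mul_le_mul_of_nonneg_right (hrnorm F) (norm_nonneg _)
      _ = ‖a (ξ - (qS p F) ξ)‖ := one_mul _
      _ ≤ ‖a‖ * ‖ξ - (qS p F) ξ‖ := le_opNorm _ _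
    · have h := hr0.norm.const_mul ‖a‖
      simpa using h
  have hDt : Tendsto (fun F : Finset J => (DS p a F - a) ξ) atTop
      (nhds ((E a - a) ξ)) := by
    have e : (fun F : Finset J => (DS p a F - a) ξ)
        = fun F : Finset J => (∑ j ∈ F, p j (a (p j ξ)))
            + ((1 - qS p F) * a * (1 - qS p F)) ξ - a ξ := by
      funext F
      rw [ContinuousLinearMap.sub_apply, DS, ContinuousLinearMap.add_apply,
        ContinuousLinearMap.sum_apply]
      simp [ContinuousLinearMap.mul_apply]
    rw [e]
    have h5 : Tendsto (fun F : Finset J => ∑ j ∈ F, p j (a (p j ξ))) atTop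
        (nhds (E a ξ)) := hE a ξ
    have h6 := (h5.add hg0).sub (tendsto_const_nhds (α := Finset J) (x := a ξ))
    simpa using h6
  refine le_of_tendsto hDt.norm (Filter.Eventually.of_forall fun F => ?_)
  calc ‖(DS p a F - a) ξ‖ ≤ ‖DS p a F - a‖ * ‖ξ‖ := le_opNorm _ _
  _ ≤ c * ‖ξ‖ := mul_le_mul_of_nonneg_right (hDbound F) (norm_nonneg ξ)

end DiagCE
end DiagCE

local notation "⟪" x ", " y "⟫" => @inner ℂ _ _ x y

theorem diagonal_conditional_expectation
    {H : Type*} [NormedAddCommGroup H] [InnerProductSpace ℂ H] [CompleteSpace H]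
    {J : Type*} (p : J → H →L[ℂ] H)
    (hidem : ∀ j, IsIdempotentElem (p j)) (hsa : ∀ j, IsSelfAdjoint (p j))
    (horth : ∀ j j', j ≠ j' → p j * p j' = 0)
    (hone : ∀ ξ : H, HasSum (fun j => p j ξ) ξ) :
    ∃ E : (H →L[ℂ] H) → (H →L[ℂ] H),
      -- `E a = Σ_j p_j a p_j`, converging in the strong operator topology
      (∀ a, ∀ ξ : H, HasSum (fun j => p j (a (p j ξ))) (E a ξ)) ∧
      -- `E` maps into the relative commutant of the family `{p_j}`
      (∀ a, E a ∈ Set.centralizer (Set.range p)) ∧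
      -- `E` is a projection onto the relative commutant
      (∀ b ∈ Set.centralizer (Set.range p), E b = b) ∧
      -- `E` is contractive
      (∀ a, ‖E a‖ ≤ ‖a‖) ∧
      -- `E` is positive
      (∀ a : H →L[ℂ] H, a.IsPositive → (E a).IsPositive) ∧
      -- bimodule property over the relative commutant
      (∀ a, ∀ d₁ ∈ Set.centralizer (Set.range p),
        ∀ d₂ ∈ Set.centralizer (Set.range p), E (d₁ * a * d₂) = d₁ * E a * d₂) ∧
      -- `‖E(a) − a‖` is dominated by the commutators with the unit ball of the
      -- von Neumann algebra generated by the `p_j` (the double commutant)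
      (∀ a : H →L[ℂ] H, ∀ c : ℝ,
        (∀ x ∈ Set.centralizer (Set.centralizer (Set.range p)),
          ‖x‖ ≤ 1 → ‖a * x - x * a‖ ≤ c) → ‖E a - a‖ ≤ c) := by
  classical
  set E : (H →L[ℂ] H) → (H →L[ℂ] H) := DiagCE.Emap hidem hsa horth with hEdef
  have hE : ∀ a, ∀ ξ : H, HasSum (fun j => p j (a (p j ξ))) (E a ξ) := fun a ξ =>
    DiagCE.Emap_hasSum hidem hsa horth a ξ
  have hpp : ∀ (j : J) (v : H), p j (p j v) = p j v := fun j v => by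
    rw [← ContinuousLinearMap.mul_apply, (hidem j).eq]
  refine ⟨E, hE, ?_, ?_, fun a => DiagCE.Emap_norm_le hidem hsa horth a, ?_, ?_,
    fun a c hc => DiagCE.commutator_bound hidem hsa horth hone hE a c hc⟩
  · -- E a lies in the relative commutant
    intro a
    rw [Set.mem_centralizer_iff]
    rintro m ⟨k, rfl⟩
    ext ξ
    have h3 := hasSum_ite_eq k (p k (a (p k ξ)))
    have h1 : HasSum (fun j => p k (p j (a (p j ξ)))) (p k (E a ξ)) := (hE a ξ).mapL (p k)
    have h2 : (fun j => p k (p j (a (p j ξ)))) =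
        fun j => if j = k then p k (a (p k ξ)) else 0 := by
      funext j
      by_cases h : j = k
      · subst h; rw [if_pos rfl, hpp]
      · rw [if_neg h, ← ContinuousLinearMap.mul_apply, horth k j (Ne.symm h),
          ContinuousLinearMap.zero_apply]
    rw [h2] at h1
    have e1 : p k (E a ξ) = p k (a (p k ξ)) := h1.unique h3
    have h4 : HasSum (fun j => p j (a (p j (p k ξ)))) (E a (p k ξ)) := hE a (p k ξ)
    have h5 : (fun j => p j (a (p j (p k ξ)))) =
        fun j => if j = k then p k (a (p k ξ)) else 0 := by
      funext j
      by_cases h : j = k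
      · subst h; rw [if_pos rfl, hpp]
      · rw [if_neg h]
        have hz : p j (p k ξ) = 0 := by
          rw [← ContinuousLinearMap.mul_apply, horth j k h, ContinuousLinearMap.zero_apply]
        rw [hz, map_zero, map_zero]
    rw [h5] at h4
    have e2 : E a (p k ξ) = p k (a (p k ξ)) := h4.unique h3
    show p k (E a ξ) = E a (p k ξ)
    rw [e1, e2]
  · -- E fixes the relative commutant
    intro b hb
    ext ξ
    have h1 : HasSum (fun j => p j (b (p j ξ))) (E b ξ) := hE b ξ
    have h2 : (fun j => p j (b (p j ξ))) = fun j => b (p j ξ) := by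
      funext j
      have hcom : p j * b = b * p j := Set.mem_centralizer_iff.mp hb (p j) ⟨j, rfl⟩
      calc p j (b (p j ξ)) = (p j * b) (p j ξ) := rfl
      _ = (b * p j) (p j ξ) := by rw [hcom]
      _ = b (p j (p j ξ)) := rfl
      _ = b (p j ξ) := by rw [hpp]
    rw [h2] at h1
    exact h1.unique ((hone ξ).mapL b)
  · -- positivity
    intro a ha
    have haSym : ∀ u v : H, ⟪a u, v⟫ = ⟪u, a v⟫ := fun u v =>
      ha.1 u v
    have hsym : ∀ x y : H, ⟪E a y, x⟫ = ⟪y, E a x⟫ := by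
      intro x y
      have h1 : HasSum (fun j => ⟪y, p j (a (p j x))⟫) ⟪y, E a x⟫ :=
        (hE a x).mapL (innerSL ℂ y)
      have h2 : HasSum (fun j => ⟪x, p j (a (p j y))⟫) ⟪x, E a y⟫ :=
        (hE a y).mapL (innerSL ℂ x)
      have h3 : HasSum (fun j => star ⟪x, p j (a (p j y))⟫) (star ⟪x, E a y⟫) :=
        h2.map (starAddEquiv : ℂ ≃+ ℂ).toAddMonoidHom continuous_star
      have h4 : (fun j => star ⟪x, p j (a (p j y))⟫) =
          fun j => ⟪y, p j (a (p j x))⟫ := by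
        funext j
        rw [← starRingEnd_apply, inner_conj_symm, DiagCE.adj_move hsa, haSym,
          DiagCE.adj_move hsa]
      rw [h4] at h3
      have h5 : star ⟪x, E a y⟫ = ⟪y, E a x⟫ := h3.unique h1
      calc ⟪E a y, x⟫ = (starRingEnd ℂ) ⟪x, E a y⟫ := (inner_conj_symm _ _).symm
      _ = star ⟪x, E a y⟫ := by rw [starRingEnd_apply]
      _ = ⟪y, E a x⟫ := h5
    constructor
    · intro x y
      exact hsym y x
    · intro ξ
      have h1 : HasSum (fun j => ⟪ξ, p j (a (p j ξ))⟫) ⟪ξ, E a ξ⟫ :=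
        (hE a ξ).mapL (innerSL ℂ ξ)
      have h2 : HasSum (fun j => RCLike.re ⟪ξ, p j (a (p j ξ))⟫)
          (RCLike.re ⟪ξ, E a ξ⟫) := h1.mapL RCLike.reCLM
      have h3 : ∀ j, (0:ℝ) ≤ RCLike.re ⟪ξ, p j (a (p j ξ))⟫ := by
        intro j
        have e : ⟪ξ, p j (a (p j ξ))⟫ = ⟪p j ξ, a (p j ξ)⟫ :=
          (DiagCE.adj_move hsa j ξ (a (p j ξ))).symm
        rw [e]
        exact ha.re_inner_nonneg_right (p j ξ)
      have h4 : (0:ℝ) ≤ RCLike.re ⟪ξ, E a ξ⟫ := hasSum_le h3 hasSum_zero h2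
      show (0:ℝ) ≤ RCLike.re ⟪E a ξ, ξ⟫
      rw [inner_re_symm]
      exact h4
  · -- bimodule property
    intro a d₁ hd₁ d₂ hd₂
    ext ξ
    have hc1 : ∀ j, p j * d₁ = d₁ * p j := fun j =>
      Set.mem_centralizer_iff.mp hd₁ (p j) ⟨j, rfl⟩
    have hc2 : ∀ j, p j * d₂ = d₂ * p j := fun j =>
      Set.mem_centralizer_iff.mp hd₂ (p j) ⟨j, rfl⟩
    have h1 : HasSum (fun j => p j ((d₁ * a * d₂) (p j ξ))) (E (d₁ * a * d₂) ξ) := hE _ ξ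
    have h2 : (fun j => p j ((d₁ * a * d₂) (p j ξ))) =
        fun j => d₁ (p j (a (p j (d₂ ξ)))) := by
      funext j
      have hop : p j * (d₁ * a * d₂) * p j = d₁ * (p j * a * p j) * d₂ := by
        calc p j * (d₁ * a * d₂) * p j = (p j * d₁) * a * (d₂ * p j) := by noncomm_ring
        _ = (d₁ * p j) * a * (p j * d₂) := by rw [hc1 j, ← hc2 j]
        _ = d₁ * (p j * a * p j) * d₂ := by noncomm_ring
      calc p j ((d₁ * a * d₂) (p j ξ)) = (p j * (d₁ * a * d₂) * p j) ξ := by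
            simp [ContinuousLinearMap.mul_apply]
      _ = (d₁ * (p j * a * p j) * d₂) ξ := by rw [hop]
      _ = d₁ (p j (a (p j (d₂ ξ)))) := by simp [ContinuousLinearMap.mul_apply]
    rw [h2] at h1
    have h3 : HasSum (fun j => d₁ (p j (a (p j (d₂ ξ))))) (d₁ (E a (d₂ ξ))) :=
      (hE a (d₂ ξ)).mapL d₁
    have h6 := h1.unique h3
    simpa [ContinuousLinearMap.mul_apply] using h6
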